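/- Fix n ∈ ℕ and let G = (ℤ/2)^n with generators x_1,…,x_n; for I ⊆ {1,…,n} let x_I = Π_{i ∈ I} x_i ∈ G, and for A ⊆ {1,…,n} let ξ_A = Σ_{g ∈ G_A} g in F2[G], where G_A is the subgroup generated by {x_i : i ∈ A}. Then for all subsets I and A of {1,…,n}, the identity x_I · ξ_A = Σ_{A ⊆ A' ⊆ A ∪ I} ξ_{A'} holds in F2[G], the sum being over all subsets A' with A ⊆ A' ⊆ A ∪ I. -/

import Mathlib

/-- The group `G = (ℤ/2)ⁿ`, written multiplicatively. -/
abbrev GrpG (n : ℕ) : Type := Multiplicative (Fin n → ZMod 2)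

/-- The `i`-th generator `x_i` of `G = (ℤ/2)ⁿ`. -/
def xgen {n : ℕ} (i : Fin n) : GrpG n := Multiplicative.ofAdd (Pi.single i 1)

/-- The subgroup `G_A ≤ G` generated by `{x_i : i ∈ A}`. -/
def GA {n : ℕ} (A : Finset (Fin n)) : Subgroup (GrpG n) :=
  Subgroup.closure (xgen '' (A : Set (Fin n)))

open scoped Classical in
/-- The element `ξ_A = ∑_{g ∈ G_A} g` of the group algebra `F2[G]`. -/
noncomputable def xiA {n : ℕ} (A : Finset (Fin n)) : MonoidAlgebra (ZMod 2) (GrpG n) :=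
  ∑ g ∈ ((GA A : Set (GrpG n)).toFinset), MonoidAlgebra.of (ZMod 2) (GrpG n) g

open Finset

lemma zmod2_cases (a : ZMod 2) : a = 0 ∨ a = 1 := by revert a; decide

lemma sum_single_apply {n : ℕ} (F : Finset (Fin n)) (j : Fin n) :
    (∑ i ∈ F, Pi.single i (1 : ZMod 2)) j = if j ∈ F then 1 else 0 := by
  rw [Finset.sum_apply]
  simp [Pi.single_apply, Finset.sum_ite_eq F j (fun _ => (1 : ZMod 2))]

lemma mem_GA {n : ℕ} (A : Finset (Fin n)) (g : GrpG n) :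
    g ∈ GA A ↔ ∀ i ∉ A, Multiplicative.toAdd g i = 0 := by
  constructor
  · intro hg
    induction hg using Subgroup.closure_induction with
    | mem x hx =>
      obtain ⟨i, hi, rfl⟩ := hx
      intro j hj
      have : i ≠ j := by rintro rfl; exact hj hi
      simp [xgen, Pi.single_apply, this.symm]
    | one => intro j hj; simp
    | mul x y hx hy ihx ihy => intro j hj; simp [toAdd_mul, ihx j hj, ihy j hj]
    | inv x hx ihx => intro j hj; simp [toAdd_inv, ihx j hj]
  · intro hg
    have key : g = ∏ i ∈ A.filter (fun i => Multiplicative.toAdd g i ≠ 0), xgen i := by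
      have : ∀ i ∈ A.filter (fun i => Multiplicative.toAdd g i ≠ 0), xgen i
          = Multiplicative.ofAdd (Pi.single i 1) := fun _ _ => rfl
      rw [Finset.prod_congr rfl this, ← ofAdd_sum]
      apply (Multiplicative.ofAdd.apply_symm_apply g).symm.trans
      congr 1
      funext j
      rw [sum_single_apply]
      by_cases hj : j ∈ A
      · rcases zmod2_cases (Multiplicative.toAdd g j) with h0 | h1
        · simp [h0, hj]
        · simp [h1, hj]
      · simp [hg j hj, hj]
    rw [key]
    apply prod_mem
    intro i hi
    exact Subgroup.subset_closure ⟨i, by simpa using (Finset.mem_filter.mp hi).1, rfl⟩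

open scoped Classical in
lemma xiA_apply {n : ℕ} (A : Finset (Fin n)) (h : GrpG n) :
    (xiA A).coeff h = if h ∈ GA A then 1 else 0 := by
  classical
  rw [xiA]
  rw [MonoidAlgebra.coeff_sum, Finset.sum_apply']
  simp only [MonoidAlgebra.of_apply, MonoidAlgebra.coeff_single, Finsupp.single_apply]
  rw [Finset.sum_ite_eq' ((GA A : Set (GrpG n)).toFinset) h (fun _ => (1 : ZMod 2))]
  simp [Set.mem_toFinset]


/-- The identity `x_I · ξ_A = ∑_{A ⊆ A' ⊆ A ∪ I} ξ_{A'}` in `F2[(ℤ/2)ⁿ]`, where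
`x_I = ∏_{i ∈ I} x_i`. -/
theorem stmt12 {n : ℕ} (I A : Finset (Fin n)) :
    MonoidAlgebra.of (ZMod 2) (GrpG n) (∏ i ∈ I, xgen i) * xiA A =
      ∑ A' ∈ Finset.Icc A (A ∪ I), xiA A' := by
  classical
  ext h
  set xI : GrpG n := ∏ i ∈ I, xgen i with hxI
  have toAdd_xI : ∀ j, Multiplicative.toAdd xI j = if j ∈ I then 1 else 0 := by
    intro j
    have hta : Multiplicative.toAdd xI = ∑ i ∈ I, Pi.single i (1 : ZMod 2) := by
      rw [hxI, toAdd_prod]; rfl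
    rw [hta]
    exact sum_single_apply I j
  -- LHS coefficient
  have hL : (MonoidAlgebra.of (ZMod 2) (GrpG n) xI * xiA A).coeff h
      = if (xI⁻¹ * h) ∈ GA A then 1 else 0 := by
    rw [MonoidAlgebra.of_apply, MonoidAlgebra.coeff_single_mul_apply, one_mul, xiA_apply]
  -- support of h
  set S : Finset (Fin n) := Finset.univ.filter (fun i => Multiplicative.toAdd h i ≠ 0) with hS
  have memGA_iff : ∀ A' : Finset (Fin n), h ∈ GA A' ↔ S ⊆ A' := by
    intro A'
    rw [mem_GA]
    constructor
    · intro hh i hi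
      rw [hS, Finset.mem_filter] at hi
      by_contra hiA'
      exact hi.2 (hh i hiA')
    · intro hsub i hiA'
      by_contra hne
      exact hiA' (hsub (by simp [hS, hne]))
  -- RHS coefficient
  have hR : (∑ A' ∈ Finset.Icc A (A ∪ I), xiA A').coeff h
      = ((((Finset.Icc A (A ∪ I))).filter (fun A' => S ⊆ A')).card : ZMod 2) := by
    rw [MonoidAlgebra.coeff_sum, Finset.sum_apply']
    simp only [xiA_apply, memGA_iff]
    rw [Finset.sum_boole]
  have filter_eq : ((Finset.Icc A (A ∪ I))).filter (fun A' => S ⊆ A')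
      = Finset.Icc (A ∪ S) (A ∪ I) := by
    ext A'
    simp only [Finset.mem_filter, Finset.mem_Icc, Finset.union_subset_iff, Finset.le_iff_subset]
    tauto
  -- the key logical equivalence
  have key : (xI⁻¹ * h) ∈ GA A ↔ A ∪ S = A ∪ I := by
    rw [mem_GA]
    have cond : ∀ i, Multiplicative.toAdd (xI⁻¹ * h) i = 0 ↔
        Multiplicative.toAdd h i = (if i ∈ I then 1 else 0) := by
      intro i
      rw [toAdd_mul, toAdd_inv, Pi.add_apply, Pi.neg_apply, toAdd_xI]
      constructor
      · intro e; linear_combination e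
      · intro e; rw [e]; ring
    constructor
    · intro hcond
      ext i
      simp only [Finset.mem_union]
      by_cases hiA : i ∈ A
      · tauto
      · have := (cond i).mp (hcond i hiA)
        constructor
        · rintro (h1 | h2)
          · exact Or.inl h1
          · right
            rw [hS, Finset.mem_filter] at h2
            by_contra hiI
            rw [if_neg hiI] at this
            exact h2.2 this
        · rintro (h1 | h2)
          · exact Or.inl h1
          · right
            rw [if_pos h2] at this
            simp [hS, this]
    · intro heq i hiA
      apply (cond i).mpr
      by_cases hiI : i ∈ I
      · rw [if_pos hiI]
        have : i ∈ A ∪ S := heq ▸ (Finset.mem_union_right A hiI)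
        rcases Finset.mem_union.mp this with h1 | h2
        · exact absurd h1 hiA
        · rw [hS, Finset.mem_filter] at h2
          rcases zmod2_cases (Multiplicative.toAdd h i) with h0 | h1
          · exact absurd h0 h2.2
          · exact h1
      · rw [if_neg hiI]
        by_contra hne
        have : i ∈ A ∪ S := Finset.mem_union_right A (by simp [hS, hne])
        rw [heq, Finset.mem_union] at this
        tauto
  rw [hL, hR, filter_eq]
  by_cases hc : A ∪ S = A ∪ I
  · rw [if_pos (key.mpr hc), hc]
    rw [Finset.card_Icc_finset (le_refl _)]
    simp
  · rw [if_neg (fun hh => hc (key.mp hh))]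
    by_cases hsub : A ∪ S ⊆ A ∪ I
    · rw [Finset.card_Icc_finset hsub]
      have hlt : (A ∪ S).card < (A ∪ I).card := by
        apply Finset.card_lt_card
        exact lt_of_le_of_ne hsub hc
      have hk : (A ∪ I).card - (A ∪ S).card ≠ 0 := by omega
      rw [Nat.cast_pow]
      have h2 : ((2 : ℕ) : ZMod 2) = 0 := rfl
      rw [h2, zero_pow hk]
    · rw [Finset.Icc_eq_empty (fun hh => hsub hh)]
      simp
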